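/- Let Γ be a group and H ≤ Γ a subgroup of finite index. Then H is presentable by a product if and only if Γ is presentable by a product. -/

import Mathlib

def PresentableByProduct (G : Type*) [Group G] : Prop :=
  ∃ G₁ G₂ : Subgroup G, (G₁ : Set G).Infinite ∧ (G₂ : Set G).Infinite ∧
    (∀ g₁ ∈ G₁, ∀ g₂ ∈ G₂, g₁ * g₂ = g₂ * g₁) ∧
    (Subgroup.closure ((G₁ : Set G) ∪ (G₂ : Set G))).FiniteIndex

lemma aux_closure_union {G : Type*} [Group G] (A B : Subgroup G) :
    Subgroup.closure ((A : Set G) ∪ (B : Set G)) = A ⊔ B := by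
  rw [Subgroup.closure_union, Subgroup.closure_eq, Subgroup.closure_eq]

lemma aux_infinite {G : Type*} [Group G] [Infinite G] (K : Subgroup G)
    (hK : K.FiniteIndex) : Infinite K := by
  by_contra hinf
  rw [not_infinite_iff_finite] at hinf
  have h1 : Nat.card K ≠ 0 := Nat.card_ne_zero.mpr ⟨One.instNonempty, hinf⟩
  have h2 : Nat.card G ≠ 0 := by
    rw [← K.card_mul_index]
    exact mul_ne_zero h1 hK.index_ne_zero
  exact h2 Nat.card_eq_zero_of_infinite

theorem stmt_12 {Γ : Type*} [Group Γ] (H : Subgroup Γ) (hH : H.FiniteIndex) :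
    PresentableByProduct ↥H ↔ PresentableByProduct Γ := by
  constructor
  · rintro ⟨G₁, G₂, h1, h2, hc, hf⟩
    rw [aux_closure_union] at hf
    refine ⟨G₁.map H.subtype, G₂.map H.subtype, ?_, ?_, ?_, ?_⟩
    · rw [Subgroup.coe_map]
      exact (Set.infinite_image_iff (Subtype.coe_injective.injOn)).mpr h1
    · rw [Subgroup.coe_map]
      exact (Set.infinite_image_iff (Subtype.coe_injective.injOn)).mpr h2
    · rintro _ ⟨a, ha, rfl⟩ _ ⟨b, hb, rfl⟩
      rw [← map_mul, ← map_mul, hc a ha b hb]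
    · rw [aux_closure_union, ← Subgroup.map_sup]
      have hle : (G₁ ⊔ G₂).map H.subtype ≤ H := by
        rintro _ ⟨a, _, rfl⟩; exact a.2
      constructor
      rw [← Subgroup.relIndex_mul_index hle]
      apply mul_ne_zero _ hH.index_ne_zero
      have : ((G₁ ⊔ G₂).map H.subtype).relIndex H = (G₁ ⊔ G₂).index := by
        rw [Subgroup.relIndex, Subgroup.subgroupOf,
          Subgroup.comap_map_eq_self_of_injective H.subtype_injective]
      rw [this]
      exact hf.index_ne_zero
  · rintro ⟨G₁, G₂, h1, h2, hc, hf⟩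
    rw [aux_closure_union] at hf
    -- the product homomorphism
    let φ : (↥G₁ × ↥G₂) →* Γ :=
      { toFun := fun p => (p.1 : Γ) * p.2
        map_one' := by simp
        map_mul' := by
          rintro ⟨a, b⟩ ⟨c, d⟩
          simp only [Prod.mk_mul_mk, Subgroup.coe_mul]
          rw [mul_assoc, ← mul_assoc (c : Γ), hc (c : Γ) c.2 (b : Γ) b.2,
            mul_assoc, ← mul_assoc, ← mul_assoc] }
    have hrange : φ.range = G₁ ⊔ G₂ := by
      apply le_antisymm
      · rintro _ ⟨⟨a, b⟩, rfl⟩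
        exact mul_mem (Subgroup.mem_sup_left a.2) (Subgroup.mem_sup_right b.2)
      · rw [sup_le_iff]
        refine ⟨fun x hx => ⟨(⟨x, hx⟩, 1), by simp [φ]⟩,
          fun x hx => ⟨(1, ⟨x, hx⟩), by simp [φ]⟩⟩
    set A : Subgroup Γ := H ⊓ G₁ with hA
    set B : Subgroup Γ := H ⊓ G₂ with hB
    have hAH : A ≤ H := inf_le_left
    have hBH : B ≤ H := inf_le_left
    have hAB : A ⊔ B ≤ G₁ ⊔ G₂ :=
      sup_le (le_trans inf_le_right le_sup_left) (le_trans inf_le_right le_sup_right)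
    -- A and B are infinite
    have infA : Infinite A := by
      have : Infinite ↥G₁ := Set.infinite_coe_iff.mpr h1
      have : Infinite (H.subgroupOf G₁) := aux_infinite _ inferInstance
      have hmap : (H.subgroupOf G₁).map G₁.subtype = A := H.subgroupOf_map_subtype G₁
      have hs : (A : Set Γ).Infinite := by
        rw [← hmap, Subgroup.coe_map]
        exact Set.Infinite.image (Subtype.coe_injective.injOn) (Set.infinite_coe_iff.mp this)
      exact hs.to_subtype
    have infB : Infinite B := by
      have : Infinite ↥G₂ := Set.infinite_coe_iff.mpr h2
      have : Infinite (H.subgroupOf G₂) := aux_infinite _ inferInstance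
      have hmap : (H.subgroupOf G₂).map G₂.subtype = B := H.subgroupOf_map_subtype G₂
      have hs : (B : Set Γ).Infinite := by
        rw [← hmap, Subgroup.coe_map]
        exact Set.Infinite.image (Subtype.coe_injective.injOn) (Set.infinite_coe_iff.mp this)
      exact hs.to_subtype
    -- A ⊔ B has finite index in Γ
    have hABfi : (A ⊔ B).index ≠ 0 := by
      rw [← Subgroup.relIndex_mul_index hAB]
      apply mul_ne_zero _ hf.index_ne_zero
      have hP : (A.subgroupOf G₁).prod (B.subgroupOf G₂) ≤ (A ⊔ B).comap φ := by
        rintro ⟨a, b⟩ hab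
        rw [Subgroup.mem_prod] at hab
        rw [Subgroup.mem_comap]
        show (a : Γ) * (b : Γ) ∈ A ⊔ B
        exact mul_mem (Subgroup.mem_sup_left (Subgroup.mem_subgroupOf.mp hab.1))
          (Subgroup.mem_sup_right (Subgroup.mem_subgroupOf.mp hab.2))
      have hdvd := Subgroup.index_dvd_of_le hP
      rw [Subgroup.index_comap, hrange] at hdvd
      apply ne_zero_of_dvd_ne_zero _ hdvd
      rw [Subgroup.index_prod]
      have e1 : A.subgroupOf G₁ = H.subgroupOf G₁ := Subgroup.inf_subgroupOf_right H G₁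
      have e2 : B.subgroupOf G₂ = H.subgroupOf G₂ := Subgroup.inf_subgroupOf_right H G₂
      rw [e1, e2]
      exact mul_ne_zero (Subgroup.instFiniteIndex_subgroupOf H G₁).index_ne_zero
        (Subgroup.instFiniteIndex_subgroupOf H G₂).index_ne_zero
    -- conclude
    refine ⟨A.subgroupOf H, B.subgroupOf H, ?_, ?_, ?_, ?_⟩
    · have : Infinite (A.subgroupOf H) := (Subgroup.subgroupOfEquivOfLe hAH).symm.toEquiv.infinite_iff.mp infA
      exact Set.infinite_coe_iff.mp this
    · have : Infinite (B.subgroupOf H) := (Subgroup.subgroupOfEquivOfLe hBH).symm.toEquiv.infinite_iff.mp infB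
      exact Set.infinite_coe_iff.mp this
    · rintro ⟨x, hx⟩ hxA ⟨y, hy⟩ hyB
      ext
      exact hc x (Subgroup.mem_subgroupOf.mp hxA).2 y (Subgroup.mem_subgroupOf.mp hyB).2
    · rw [aux_closure_union]
      constructor
      have hmapsup : (A.subgroupOf H ⊔ B.subgroupOf H).map H.subtype = A ⊔ B := by
        rw [Subgroup.map_sup, Subgroup.subgroupOf_map_subtype, Subgroup.subgroupOf_map_subtype,
          inf_eq_left.mpr hAH, inf_eq_left.mpr hBH]
      have : A.subgroupOf H ⊔ B.subgroupOf H = (A ⊔ B).subgroupOf H := by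
        rw [← hmapsup]
        exact (Subgroup.comap_map_eq_self_of_injective H.subtype_injective _).symm
      rw [this]
      have := Subgroup.relIndex_mul_index (sup_le hAH hBH)
      have hrel : (A ⊔ B).relIndex H ≠ 0 := by
        intro h0
        rw [← Subgroup.relIndex_mul_index (sup_le hAH hBH), h0, zero_mul] at hABfi
        exact hABfi rfl
      exact hrel
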